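/- For every binary matrix M (no all-zero rows, no all-zero columns) with exactly k pairwise distinct columns, k/2 ≤ η(M) ≤ k, where η(M) is the minimum number of pairwise distinct rows in a conflict-free row split of M. -/

import Mathlib

/-- The support of column `j` of binary matrix `M`: the set of rows with a `1` in column `j`. -/
def Supp {α β : Type*} [Fintype α] [DecidableEq α] (M : α → β → Bool) (j : β) : Finset α :=
  Finset.univ.filter (fun r => M r j = true)

/-- `M` is conflict-free: no two columns contain three rows forming the pattern
`[[1,1],[1,0],[0,1]]`. -/
def ConflictFree {α β : Type*} (M : α → β → Bool) : Prop :=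
  ∀ i j : β, ¬ ∃ r r' r'' : α, M r i = true ∧ M r j = true ∧ M r' i = true ∧
    M r' j = false ∧ M r'' i = false ∧ M r'' j = true

/-- `M'` is a row split of `M` via the assignment `f` of rows of `M'` to rows of `M`:
the parts are nonempty (`f` surjective) and each row of `M` is the bitwise OR of its part. -/
def IsRowSplit {α α' β : Type*} (M : α → β → Bool) (M' : α' → β → Bool) (f : α' → α) : Prop :=
  Function.Surjective f ∧ ∀ i j, M i j = true ↔ ∃ r', f r' = i ∧ M' r' j = true

/-- `v` is a vertex of the containment digraph `D_M`, i.e. the support of some column. -/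
def IsSupport {α β : Type*} [Fintype α] [DecidableEq α] (M : α → β → Bool)
    (v : Finset α) : Prop := ∃ j, v = Supp M j

/-- `B` is a branching of the containment digraph `D_M`: its arcs are arcs of `D_M`
(proper inclusions of supports) and every vertex has at most one outgoing arc. -/
def IsBranching {α β : Type*} [Fintype α] [DecidableEq α] (M : α → β → Bool)
    (B : Finset α → Finset α → Prop) : Prop :=
  (∀ u v, B u v → IsSupport M u ∧ IsSupport M v ∧ u ⊂ v) ∧
  (∀ u v w, B u v → B u w → v = w)

/-- The set `U(B)` of `B`-uncovered pairs `(r, v)`: `v` a vertex of `D_M`, `r ∈ v`, and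
`r` belongs to no `B`-in-neighbor of `v`. -/
def UncovPairs {α β : Type*} [Fintype α] [DecidableEq α] (M : α → β → Bool)
    (B : Finset α → Finset α → Prop) : Set (α × Finset α) :=
  {p | IsSupport M p.2 ∧ p.1 ∈ p.2 ∧ ∀ u, B u p.2 → p.1 ∉ u}

/-- The set `I(B)` of `B`-irreducible vertices of `D_M`. -/
def IrredVerts {α β : Type*} [Fintype α] [DecidableEq α] (M : α → β → Bool)
    (B : Finset α → Finset α → Prop) : Set (Finset α) :=
  {v | IsSupport M v ∧ ∃ r ∈ v, ∀ u, B u v → r ∉ u}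

/-- `γ(M)`: the minimum number of rows of a conflict-free row split of `M`. -/
noncomputable def gammaM {α β : Type*} (M : α → β → Bool) : ℕ :=
  sInf {k | ∃ (m' : ℕ) (M' : Fin m' → β → Bool) (f : Fin m' → α),
    IsRowSplit M M' f ∧ ConflictFree M' ∧ k = m'}

/-- `η(M)`: the minimum number of pairwise distinct rows of a conflict-free row split of `M`. -/
noncomputable def etaM {α β : Type*} [Fintype β] [DecidableEq β] (M : α → β → Bool) : ℕ :=
  sInf {k | ∃ (m' : ℕ) (M' : Fin m' → β → Bool) (f : Fin m' → α),
    IsRowSplit M M' f ∧ ConflictFree M' ∧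
    k = (Finset.univ.image (fun r : Fin m' => fun j => M' r j)).card}

/-- `β(M)`: the minimum number of uncovered pairs over all branchings of `D_M`. -/
noncomputable def betaM {α β : Type*} [Fintype α] [DecidableEq α] (M : α → β → Bool) : ℕ :=
  sInf {k | ∃ B, IsBranching M B ∧ (UncovPairs M B).ncard = k}

/-- `ζ(M)`: the minimum number of irreducible vertices over all branchings of `D_M`. -/
noncomputable def zetaM {α β : Type*} [Fintype α] [DecidableEq α] (M : α → β → Bool) : ℕ :=
  sInf {k | ∃ B, IsBranching M B ∧ (IrredVerts M B).ncard = k}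


open Finset in
lemma exists_max_above {V : Type*} [DecidableEq V] (F : Finset (Finset V)) {a : Finset V}
    (ha : a ∈ F) : ∃ b ∈ F, a ⊆ b ∧ ∀ c ∈ F, ¬ b ⊂ c := by
  classical
  obtain ⟨b, hb, hmax⟩ := (F.filter (fun T => a ⊆ T)).exists_max_image (fun T => T.card)
    ⟨a, by simp [ha]⟩
  simp only [mem_filter] at hb
  refine ⟨b, hb.1, hb.2, fun c hc hbc => ?_⟩
  have hc' : c ∈ F.filter (fun T => a ⊆ T) := by
    simp [hc, hb.2.trans hbc.subset]
  exact absurd (hmax c hc') (not_le.mpr (card_lt_card hbc))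

open Finset in
lemma laminar_aux {V : Type*} [DecidableEq V] : ∀ (N : ℕ) (F : Finset (Finset V)),
    F.card ≤ N →
    (∀ S ∈ F, S.Nonempty) →
    (∀ S ∈ F, ∀ T ∈ F, S ⊆ T ∨ T ⊆ S ∨ Disjoint S T) →
    F.card + (F.filter (fun S => ∀ T ∈ F, ¬ S ⊂ T)).card ≤ 2 * (F.sup id).card := by
  classical
  intro N
  induction N with
  | zero =>
    intro F hF _ _
    simp [Finset.card_eq_zero.mp (Nat.le_zero.mp hF)]
  | succ N ih =>
    intro F hFN hne hlam
    rcases F.eq_empty_or_nonempty with rfl | hFne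
    · simp
    obtain ⟨S, hS, -, hSmax⟩ := exists_max_above F hFne.choose_spec
    set F₁ : Finset (Finset V) := F.filter (fun T => T ⊆ S) with hF₁
    set F₂ : Finset (Finset V) := F.filter (fun T => ¬ T ⊆ S) with hF₂
    set F₁' : Finset (Finset V) := F₁.erase S with hF₁'
    have hSF₁ : S ∈ F₁ := by simp [hF₁, hS]
    have hSnF₂ : S ∉ F₂ := by simp [hF₂]
    have hF₂sub : F₂ ⊆ F := filter_subset _ _
    have hF₁'sub : F₁' ⊆ F := (erase_subset _ _).trans (filter_subset _ _)
    have hF₂dis : ∀ T ∈ F₂, Disjoint S T := by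
      intro T hT
      simp only [hF₂, mem_filter] at hT
      rcases hlam T hT.1 S hS with h | h | h
      · exact absurd h hT.2
      · rcases (Finset.le_iff_subset.mpr h).lt_or_eq with h' | h'
        · exact absurd (Finset.lt_iff_ssubset.mp h') (hSmax T hT.1)
        · exact absurd (subset_of_eq h'.symm) hT.2
      · exact h.symm
    -- cards
    have hcard12 : F₁.card + F₂.card = F.card :=
      card_filter_add_card_filter_not _
    have hcard1 : F₁.card = F₁'.card + 1 := by
      rw [hF₁', card_erase_of_mem hSF₁]
      have : 0 < F₁.card := card_pos.mpr ⟨S, hSF₁⟩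
      omega
    -- sup decomposition
    have hsup1 : F₁.sup id = S := by
      apply subset_antisymm
      · exact Finset.le_iff_subset.mp
          (Finset.sup_le (fun T hT => Finset.le_iff_subset.mpr (mem_filter.mp hT).2))
      · exact Finset.le_iff_subset.mp (le_sup (f := id) hSF₁)
    have hsupdis : Disjoint (F₁.sup id) (F₂.sup id) := by
      rw [hsup1]
      exact Finset.disjoint_sup_right.mpr (fun T hT => hF₂dis T hT)
    have hsupF : F.sup id = F₁.sup id ∪ F₂.sup id := by
      rw [← filter_union_filter_not_eq (p := fun T => T ⊆ S) F, Finset.sup_union]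
      rfl
    have hsupcard : (F.sup id).card = S.card + (F₂.sup id).card := by
      rw [hsupF, card_union_of_disjoint hsupdis, hsup1]
    -- maximal elements
    have hmaxeq : F.filter (fun T => ∀ T' ∈ F, ¬ T ⊂ T')
        = insert S (F₂.filter (fun T => ∀ T' ∈ F₂, ¬ T ⊂ T')) := by
      apply subset_antisymm
      · intro T hT
        simp only [mem_filter] at hT
        rcases hT with ⟨hTF, hTmax⟩
        by_cases hTS : T ⊆ S
        · rcases (Finset.le_iff_subset.mpr hTS).lt_or_eq with h' | h'
          · exact absurd (Finset.lt_iff_ssubset.mp h') (hTmax S hS)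
          · simp [h']
        · have : T ∈ F₂ := by simp [hF₂, hTF, hTS]
          exact mem_insert_of_mem (mem_filter.mpr ⟨this, fun T' hT' => hTmax T' (hF₂sub hT')⟩)
      · intro T hT
        rcases mem_insert.mp hT with rfl | hT
        · exact mem_filter.mpr ⟨hS, hSmax⟩
        · simp only [mem_filter] at hT ⊢
          refine ⟨hF₂sub hT.1, fun T' hT' hTT' => ?_⟩
          have hT'F₂ : T' ∈ F₂ := by
            simp only [hF₂, mem_filter]
            refine ⟨hT', fun hT'S => ?_⟩
            exact (mem_filter.mp hT.1).2 (hTT'.subset.trans hT'S)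
          exact hT.2 T' hT'F₂ hTT'
    have hSnotin : S ∉ F₂.filter (fun T => ∀ T' ∈ F₂, ¬ T ⊂ T') :=
      fun h => hSnF₂ (mem_filter.mp h).1
    have hmaxcard : (F.filter (fun T => ∀ T' ∈ F, ¬ T ⊂ T')).card
        = (F₂.filter (fun T => ∀ T' ∈ F₂, ¬ T ⊂ T')).card + 1 := by
      rw [hmaxeq, card_insert_of_notMem hSnotin]
    -- cardinality bounds for induction
    have hcardF : F.card ≤ N + 1 := hFN
    have hF₂N : F₂.card ≤ N := by
      have : F₂ ⊆ F.erase S := fun T hT =>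
        mem_erase.mpr ⟨fun h => hSnF₂ (h ▸ hT), hF₂sub hT⟩
      have := card_le_card this
      rw [card_erase_of_mem hS] at this
      omega
    have hF₁'N : F₁'.card ≤ N := by
      have : F₁' ⊆ F.erase S := fun T hT =>
        mem_erase.mpr ⟨(mem_erase.mp hT).1, hF₁'sub hT⟩
      have := card_le_card this
      rw [card_erase_of_mem hS] at this
      omega
    -- IH applied to F₂
    have ih₂ := ih F₂ hF₂N (fun T hT => hne T (hF₂sub hT))
      (fun T hT T' hT' => hlam T (hF₂sub hT) T' (hF₂sub hT'))
    -- key claim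
    have hkey : F₁'.card + 2 ≤ 2 * S.card := by
      rcases F₁'.eq_empty_or_nonempty with h0 | h1'
      · have : 1 ≤ S.card := card_pos.mpr (hne S hS)
        rw [h0]
        simp only [card_empty]
        omega
      · have hsub1' : ∀ T ∈ F₁', T ⊂ S := by
          intro T hT
          rcases (Finset.le_iff_subset.mpr
              (mem_filter.mp (mem_of_mem_erase hT)).2).lt_or_eq with h | h
          · exact Finset.lt_iff_ssubset.mp h
          · exact absurd h (ne_of_mem_erase hT)
        have ih₁ := ih F₁' hF₁'N (fun T hT => hne T (hF₁'sub hT))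
          (fun T hT T' hT' => hlam T (hF₁'sub hT) T' (hF₁'sub hT'))
        have hsup1' : F₁'.sup id ⊆ S :=
          Finset.le_iff_subset.mp
            (Finset.sup_le (fun T hT => Finset.le_iff_subset.mpr (hsub1' T hT).subset))
        by_cases h2 : 2 ≤ (F₁'.filter (fun T => ∀ T' ∈ F₁', ¬ T ⊂ T')).card
        · have := card_le_card hsup1'
          omega
        · -- unique maximal element
          obtain ⟨T₀, hT₀F, -, hT₀max⟩ := exists_max_above F₁' h1'.choose_spec
          have hT₀mem : T₀ ∈ F₁'.filter (fun T => ∀ T' ∈ F₁', ¬ T ⊂ T') :=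
            mem_filter.mpr ⟨hT₀F, hT₀max⟩
          have hall : ∀ T ∈ F₁', T ⊆ T₀ := by
            intro T hT
            obtain ⟨b, hbF, hTb, hbmax⟩ := exists_max_above F₁' hT
            have hbmem : b ∈ F₁'.filter (fun T => ∀ T' ∈ F₁', ¬ T ⊂ T') :=
              mem_filter.mpr ⟨hbF, hbmax⟩
            have hb : b = T₀ := by
              by_contra hne'
              have := Finset.one_lt_card.mpr ⟨b, hbmem, T₀, hT₀mem, hne'⟩
              omega
            exact hb ▸ hTb
          have hsupT₀ : F₁'.sup id ⊆ T₀ :=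
            Finset.le_iff_subset.mp
              (Finset.sup_le (fun T hT => Finset.le_iff_subset.mpr (hall T hT)))
          have hT₀S : T₀ ⊂ S := hsub1' T₀ hT₀F
          have hcards : (F₁'.sup id).card ≤ T₀.card := card_le_card hsupT₀
          have hT₀card : T₀.card < S.card := card_lt_card hT₀S
          have h1 : 1 ≤ (F₁'.filter (fun T => ∀ T' ∈ F₁', ¬ T ⊂ T')).card :=
            card_pos.mpr ⟨T₀, hT₀mem⟩
          omega
    omega

open Finset in
lemma laminar_card_le {V : Type*} [DecidableEq V] (U : Finset V) (F : Finset (Finset V))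
    (hne : ∀ S ∈ F, S.Nonempty) (hsub : ∀ S ∈ F, S ⊆ U)
    (hlam : ∀ S ∈ F, ∀ T ∈ F, S ⊆ T ∨ T ⊆ S ∨ Disjoint S T) :
    F.card ≤ 2 * U.card := by
  classical
  have h := laminar_aux F.card F le_rfl hne hlam
  have hsupU : F.sup id ⊆ U :=
    Finset.le_iff_subset.mp (Finset.sup_le (fun T hT => Finset.le_iff_subset.mpr (hsub T hT)))
  have := Finset.card_le_card hsupU
  omega

open Finset in
lemma card_image_le_of_factor {α β γ : Type*} [DecidableEq β] [DecidableEq γ]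
    (s : Finset α) (f : α → β) (g : α → γ)
    (h : ∀ a ∈ s, ∀ b ∈ s, g a = g b → f a = f b) :
    (s.image f).card ≤ (s.image g).card := by
  classical
  rcases s.eq_empty_or_nonempty with rfl | ⟨a₀, ha₀⟩
  · simp
  set h' : γ → β := fun c => if hc : ∃ a ∈ s, g a = c then f hc.choose else f a₀ with hh'
  have himg : s.image f = (s.image g).image h' := by
    ext b
    simp only [mem_image]
    constructor
    · rintro ⟨a, ha, rfl⟩
      refine ⟨g a, ⟨a, ha, rfl⟩, ?_⟩
      have hc : ∃ a' ∈ s, g a' = g a := ⟨a, ha, rfl⟩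
      simp only [hh', dif_pos hc]
      obtain ⟨ha', hga'⟩ := hc.choose_spec
      exact h _ ha' _ ha hga'
    · rintro ⟨c, ⟨a, ha, rfl⟩, rfl⟩
      have hc : ∃ a' ∈ s, g a' = g a := ⟨a, ha, rfl⟩
      refine ⟨hc.choose, hc.choose_spec.1, ?_⟩
      simp only [hh', dif_pos hc]
  rw [himg]
  exact card_image_le

lemma bool_eq_of_iff {a b : Bool} (h : a = true ↔ b = true) : a = b := by
  cases a <;> cases b <;> simp_all

section MainProof

open Finset

theorem stmt_14 {m n : ℕ} (M : Fin m → Fin n → Bool)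
    (hrow : ∀ r, ∃ j, M r j = true)
    (hcol : ∀ j, ∃ r, M r j = true)
    (k : ℕ)
    (hk : k = (Finset.univ.image (fun j : Fin n => fun r : Fin m => M r j)).card) :
    k ≤ 2 * etaM M ∧ etaM M ≤ k := by
  classical
  -- column function
  let cls : Fin n → (Fin m → Bool) := fun j => fun r => M r j
  -- upper-bound witness: split each row into indicator rows of column classes
  let I := {p : Fin m × Fin n // M p.1 p.2 = true}
  let N := Fintype.card I
  let e : Fin N ≃ I := (Fintype.equivFin I).symm
  let M' : Fin N → Fin n → Bool := fun r j' => decide (cls j' = cls (e r).1.2)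
  let f : Fin N → Fin m := fun r => (e r).1.1
  have hsplit : IsRowSplit M M' f := by
    constructor
    · intro i
      obtain ⟨j, hj⟩ := hrow i
      refine ⟨e.symm ⟨(i, j), hj⟩, ?_⟩
      show (e (e.symm ⟨(i, j), hj⟩)).1.1 = i
      rw [e.apply_symm_apply]
    · intro i j
      constructor
      · intro hij
        refine ⟨e.symm ⟨(i, j), hij⟩, ?_, ?_⟩
        · show (e (e.symm ⟨(i, j), hij⟩)).1.1 = i
          rw [e.apply_symm_apply]
        · show decide (cls j = cls (e (e.symm ⟨(i, j), hij⟩)).1.2) = true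
          rw [e.apply_symm_apply]
          simp
      · rintro ⟨r, rfl, hr⟩
        have h1 : cls j = cls (e r).1.2 := of_decide_eq_true hr
        have h2 : congrFun h1 (e r).1.1 = congrFun h1 (e r).1.1 := rfl
        show M (e r).1.1 j = true
        have h3 : M (e r).1.1 j = M (e r).1.1 (e r).1.2 := congrFun h1 (e r).1.1
        rw [h3]
        exact (e r).2
  have hcf : ConflictFree M' := by
    rintro i j ⟨r, r', r'', h1, h2, h3, h4, -, -⟩
    have e1 : cls i = cls (e r).1.2 := of_decide_eq_true h1
    have e2 : cls j = cls (e r).1.2 := of_decide_eq_true h2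
    have e3 : cls i = cls (e r').1.2 := of_decide_eq_true h3
    have e4 : ¬ (cls j = cls (e r').1.2) := of_decide_eq_false h4
    exact e4 ((e2.trans e1.symm).trans e3)
  -- upper bound
  have hub : etaM M ≤ k := by
    have hmem : (Finset.univ.image (fun r : Fin N => fun j => M' r j)).card ∈
        {k | ∃ (m' : ℕ) (M'' : Fin m' → Fin n → Bool) (f' : Fin m' → Fin m),
          IsRowSplit M M'' f' ∧ ConflictFree M'' ∧
          k = (Finset.univ.image (fun r : Fin m' => fun j => M'' r j)).card} :=
      ⟨N, M', f, hsplit, hcf, rfl⟩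
    have h1 : etaM M ≤ (Finset.univ.image (fun r : Fin N => fun j => M' r j)).card :=
      Nat.sInf_le hmem
    refine h1.trans ?_
    have hsub : Finset.univ.image (fun r : Fin N => fun j => M' r j)
        ⊆ (Finset.univ.image cls).image (fun v => fun j' => decide (cls j' = v)) := by
      intro x hx
      obtain ⟨r, -, rfl⟩ := Finset.mem_image.mp hx
      exact Finset.mem_image.mpr ⟨cls (e r).1.2,
        Finset.mem_image_of_mem _ (Finset.mem_univ _), rfl⟩
    calc (Finset.univ.image (fun r : Fin N => fun j => M' r j)).card
        ≤ ((Finset.univ.image cls).image (fun v => fun j' => decide (cls j' = v))).card :=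
          Finset.card_le_card hsub
      _ ≤ (Finset.univ.image cls).card := Finset.card_image_le
      _ = k := by rw [hk]
  -- lower bound
  have hlb : k ≤ 2 * etaM M := by
    have hne' : {k | ∃ (m' : ℕ) (M'' : Fin m' → Fin n → Bool) (f' : Fin m' → Fin m),
          IsRowSplit M M'' f' ∧ ConflictFree M'' ∧
          k = (Finset.univ.image (fun r : Fin m' => fun j => M'' r j)).card}.Nonempty :=
      ⟨_, N, M', f, hsplit, hcf, rfl⟩
    obtain ⟨m', M2, f2, hsplit2, hcf2, hd⟩ := Nat.sInf_mem hne'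
    set V : Finset (Fin n → Bool) :=
      Finset.univ.image (fun r : Fin m' => fun j => M2 r j) with hV
    set Sf : Fin n → Finset (Fin n → Bool) :=
      fun j => V.filter (fun v => v j = true) with hSf
    have hrowmem : ∀ r : Fin m', (fun j => M2 r j) ∈ V := by
      intro r
      exact Finset.mem_image_of_mem _ (Finset.mem_univ r)
    -- well-definedness: equal supports give equal columns of M
    have hwd : ∀ a ∈ (Finset.univ : Finset (Fin n)), ∀ b ∈ (Finset.univ : Finset (Fin n)),
        Sf a = Sf b → cls a = cls b := by
      intro j _ j' _ h
      funext i
      apply bool_eq_of_iff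
      have hcolsame : ∀ r : Fin m', (M2 r j = true ↔ M2 r j' = true) := by
        intro r
        have hjm : (fun jj => M2 r jj) ∈ Sf j ↔ M2 r j = true := by
          simp [hSf, hrowmem r]
        have hjm' : (fun jj => M2 r jj) ∈ Sf j' ↔ M2 r j' = true := by
          simp [hSf, hrowmem r]
        rw [← hjm, ← hjm', h]
      rw [hsplit2.2 i j, hsplit2.2 i j']
      constructor
      · rintro ⟨r, hr, hm⟩; exact ⟨r, hr, (hcolsame r).mp hm⟩
      · rintro ⟨r, hr, hm⟩; exact ⟨r, hr, (hcolsame r).mpr hm⟩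
    -- k ≤ number of supports
    have hk1 : k ≤ (Finset.univ.image Sf).card := by
      rw [hk]
      exact card_image_le_of_factor Finset.univ cls Sf hwd
    -- supports form a laminar family of nonempty subsets of V
    have hnonempty : ∀ S ∈ Finset.univ.image Sf, S.Nonempty := by
      intro S hS
      obtain ⟨j, -, rfl⟩ := Finset.mem_image.mp hS
      obtain ⟨i, hi⟩ := hcol j
      obtain ⟨r, -, hm⟩ := (hsplit2.2 i j).mp hi
      exact ⟨fun jj => M2 r jj, Finset.mem_filter.mpr ⟨hrowmem r, hm⟩⟩
    have hsubV : ∀ S ∈ Finset.univ.image Sf, S ⊆ V := by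
      intro S hS
      obtain ⟨j, -, rfl⟩ := Finset.mem_image.mp hS
      exact Finset.filter_subset _ _
    have hlam : ∀ S ∈ Finset.univ.image Sf, ∀ T ∈ Finset.univ.image Sf,
        S ⊆ T ∨ T ⊆ S ∨ Disjoint S T := by
      intro S hS T hT
      obtain ⟨i, -, rfl⟩ := Finset.mem_image.mp hS
      obtain ⟨j, -, rfl⟩ := Finset.mem_image.mp hT
      by_contra hcon
      push_neg at hcon
      obtain ⟨h1, h2, h3⟩ := hcon
      obtain ⟨v, hv1, hv2⟩ := Finset.not_subset.mp h1
      obtain ⟨w, hw1, hw2⟩ := Finset.not_subset.mp h2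
      obtain ⟨u, hu⟩ := Finset.not_disjoint_iff.mp h3
      -- u ∈ Sf i ∩ Sf j, v ∈ Sf i \\ Sf j, w ∈ Sf j \\ Sf i
      obtain ⟨ru, -, hru⟩ := Finset.mem_image.mp (Finset.mem_filter.mp hu.1).1
      obtain ⟨rv, -, hrv⟩ := Finset.mem_image.mp (Finset.mem_filter.mp hv1).1
      obtain ⟨rw', -, hrw⟩ := Finset.mem_image.mp (Finset.mem_filter.mp hw1).1
      have hvj : v j = false :=
        Bool.eq_false_iff.mpr (fun hh => hv2 (Finset.mem_filter.mpr
          ⟨(Finset.mem_filter.mp hv1).1, hh⟩))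
      have hwi : w i = false :=
        Bool.eq_false_iff.mpr (fun hh => hw2 (Finset.mem_filter.mpr
          ⟨(Finset.mem_filter.mp hw1).1, hh⟩))
      apply hcf2 i j
      refine ⟨ru, rv, rw', ?_, ?_, ?_, ?_, ?_, ?_⟩
      · exact (congrFun hru i).trans (Finset.mem_filter.mp hu.1).2
      · exact (congrFun hru j).trans (Finset.mem_filter.mp hu.2).2
      · exact (congrFun hrv i).trans (Finset.mem_filter.mp hv1).2
      · exact (congrFun hrv j).trans hvj
      · exact (congrFun hrw i).trans hwi
      · exact (congrFun hrw j).trans (Finset.mem_filter.mp hw1).2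
    have hFcard := laminar_card_le V (Finset.univ.image Sf) hnonempty hsubV hlam
    have hdV : etaM M = V.card := hd
    rw [hdV]
    exact hk1.trans hFcard
  exact ⟨hlb, hub⟩

end MainProof
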